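/- Let T be a unit equilateral triangle with height h = √3/2 and y = h/3. Suppose p₁ is a vertex of T and p₂ lies on the side opposite p₁ (so |p₁p₂| ≥ h). Suppose two agents move at speed at most 1, agent 1 is at p₁ at time t′ ≥ 1/2 + y and agent 2 is at p₂ at time t with t′ < t < 1/2 + 4y − r, where 0 ≤ r. Then at no time t_z ∈ [t′, t] can the two agents be within distance r of each other. -/
import Mathlib

/-- Generalized Meeting Lemma. -/
theorem stmt7 (p₁ p₂ : EuclideanSpace ℝ (Fin 2)) (r t' t : ℝ) (hr : 0 ≤ r)
    (h : ℝ) (y : ℝ) (hh : h = Real.sqrt 3 / 2) (hy : y = h / 3)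
    (hopp : dist p₁ p₂ ≥ h)
    (f g : ℝ → EuclideanSpace ℝ (Fin 2))
    (hf : LipschitzWith 1 f) (hg : LipschitzWith 1 g)
    (hf1 : f t' = p₁) (hg2 : g t = p₂)
    (ht' : t' ≥ 1 / 2 + y) (htt : t' < t) (ht : t < 1 / 2 + 4 * y - r) :
    ∀ tz ∈ Set.Icc t' t, dist (f tz) (g tz) > r := by
  rintro tz ⟨h1, h2⟩
  by_contra hcon
  push_neg at hcon
  have hA : dist p₁ (f tz) ≤ tz - t' := by
    rw [← hf1]
    have := hf.dist_le_mul t' tz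
    rw [Real.dist_eq, abs_sub_comm, abs_of_nonneg (sub_nonneg.2 h1), NNReal.coe_one] at this
    linarith

  have hB : dist (g tz) p₂ ≤ t - tz := by
    rw [← hg2]
    have := hg.dist_le_mul tz t
    rw [Real.dist_eq, abs_sub_comm, abs_of_nonneg (sub_nonneg.2 h2), NNReal.coe_one] at this
    linarith

  have : dist p₁ p₂ ≤ (tz - t') + r + (t - tz) :=
    (dist_triangle4 p₁ (f tz) (g tz) p₂).trans (by gcongr)
  have h3y : h = 3 * y := by rw [hy]; ring
  linarith
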